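/- Let d = 3, let P ∈ ℝ³ with P ≠ 0, and let μ₊, μ₋ ∈ (0,1) with μ₊ + μ₋ = 1. Define the ultra-relativistic pair kinetic symbol T_{P,0,μ±}(η) := |μ₊P − η| + |μ₋P + η| − |P|. Then T_{P,0,μ±}(η) ≥ 0 for all η, T_{P,0,μ±}(sP) = 0 for every s ∈ [−μ₋, μ₊], and for every s ∈ (−μ₋, μ₊) and every δ > 0 one has ∫_{B_δ(sP)} T_{P,0,μ±}(η)^{-1} dη = ∞. -/

import Mathlib

open MeasureTheory RealInnerProductSpace ENNReal

set_option maxHeartbeats 2000000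

/-- The ultra-relativistic pair symbol `T_{P,0,μ±}(η) = |μ₊P − η| + |μ₋P + η| − |P|`
(in dimension 3, `P ≠ 0`) is nonnegative, vanishes on the segment
`{sP : −μ₋ ≤ s ≤ μ₊}`, and has a thick zero set near every interior point of
this segment: `∫_{B_δ(sP)} T(η)⁻¹ dη = ∞` for all `δ > 0`. -/
theorem ultra_relativistic_pair_thick_zero_set
    (P : EuclideanSpace ℝ (Fin 3)) (hP : P ≠ 0)
    (μp μm : ℝ) (hμp : μp ∈ Set.Ioo (0:ℝ) 1) (hμm : μm ∈ Set.Ioo (0:ℝ) 1)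
    (hsum : μp + μm = 1) :
    (∀ η : EuclideanSpace ℝ (Fin 3),
        0 ≤ ‖μp • P - η‖ + ‖μm • P + η‖ - ‖P‖) ∧
    (∀ s : ℝ, s ∈ Set.Icc (-μm) μp →
        ‖μp • P - s • P‖ + ‖μm • P + s • P‖ - ‖P‖ = 0) ∧
    (∀ s : ℝ, s ∈ Set.Ioo (-μm) μp → ∀ δ : ℝ, 0 < δ →
        ∫⁻ η in Metric.ball (s • P) δ,
          (ENNReal.ofReal (‖μp • P - η‖ + ‖μm • P + η‖ - ‖P‖))⁻¹ = ⊤) := by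
  obtain ⟨hμp0, hμp1⟩ := hμp
  obtain ⟨hμm0, hμm1⟩ := hμm
  have hPn : 0 < ‖P‖ := norm_pos_iff.mpr hP
  have keyP : ∀ η : EuclideanSpace ℝ (Fin 3), μp • P - η + (μm • P + η) = P := by
    intro η
    have h : μp • P - η + (μm • P + η) = (μp + μm) • P := by
      rw [add_smul]; abel
    rw [h, hsum, one_smul]
  refine ⟨?_, ?_, ?_⟩
  · intro η
    have h := norm_add_le (μp • P - η) (μm • P + η)
    rw [keyP η] at h
    linarith
  · intro s hs
    have h1 : μp • P - s • P = (μp - s) • P := (sub_smul _ _ _).symm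
    have h2 : μm • P + s • P = (μm + s) • P := (add_smul _ _ _).symm
    rw [h1, h2, norm_smul, norm_smul, Real.norm_eq_abs, Real.norm_eq_abs,
      abs_of_nonneg (by linarith [hs.2] : (0:ℝ) ≤ μp - s),
      abs_of_nonneg (by linarith [hs.1] : (0:ℝ) ≤ μm + s)]
    nlinarith
  · intro s hs δ hδ
    obtain ⟨hs1, hs2⟩ := hs
    -- the unit vector along P
    set u : EuclideanSpace ℝ (Fin 3) := ‖P‖⁻¹ • P with hu_def
    have hu : ‖u‖ = 1 := by
      rw [hu_def, norm_smul, norm_inv, norm_norm, inv_mul_cancel₀ hPn.ne']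
    have hPu : P = ‖P‖ • u := by
      rw [hu_def, smul_smul, mul_inv_cancel₀ hPn.ne', one_smul]
    -- an orthonormal basis whose first vector is u
    have hcard : Module.finrank ℝ (EuclideanSpace ℝ (Fin 3)) = Fintype.card (Fin 3) := by
      simp
    have horth : Orthonormal ℝ (Set.restrict {(0 : Fin 3)} (fun _ : Fin 3 => u)) := by
      constructor
      · intro i; exact hu
      · intro i j hij
        exact absurd (Subtype.ext (i.2.trans j.2.symm)) hij
    obtain ⟨b, hb⟩ := horth.exists_orthonormalBasis_extension_of_card_eq hcard
    have hb0 : b 0 = u := hb 0 rfl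
    set e := b.repr with he_def
    -- constants
    set c : ℝ := min (μp - s) (s + μm) * ‖P‖ / 2 with hc_def
    have hminpos : 0 < min (μp - s) (s + μm) := lt_min (by linarith) (by linarith)
    have hc : 0 < c := by
      rw [hc_def]; positivity
    set ρ : ℝ := min δ c with hρ_def
    have hρ : 0 < ρ := lt_min hδ hc
    have hρδ : ρ ≤ δ := min_le_left _ _
    have hρc : ρ ≤ c := min_le_right _ _
    -- the key upper bound for the symbol on the small ball
    have key : ∀ η ∈ Metric.ball (s • P) ρ,
        ‖μp • P - η‖ + ‖μm • P + η‖ - ‖P‖ ≤ (‖η‖ ^ 2 - ⟪u, η⟫ ^ 2) / c := by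
      intro η hη
      set t : ℝ := ⟪u, η⟫ with ht_def
      have hPη : ⟪P, η⟫ = ‖P‖ * t := by
        conv_lhs => rw [hPu]
        rw [real_inner_smul_left]
      have habs : |t| ≤ ‖η‖ := by
        have h := abs_real_inner_le_norm u η
        rwa [hu, one_mul] at h
      have hW : 0 ≤ ‖η‖ ^ 2 - t ^ 2 := by
        nlinarith [abs_nonneg t, sq_abs t, norm_nonneg η]
      have huP : ⟪u, P⟫ = ‖P‖ := by
        rw [hu_def, real_inner_smul_left, real_inner_self_eq_norm_sq]
        field_simp
      have htt : |t - s * ‖P‖| < ρ := by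
        have h1 : t - s * ‖P‖ = ⟪u, η - s • P⟫ := by
          rw [inner_sub_right, real_inner_smul_right, huP, ht_def]
        have h2 : |⟪u, η - s • P⟫| ≤ ‖η - s • P‖ := by
          have h := abs_real_inner_le_norm u (η - s • P)
          rwa [hu, one_mul] at h
        have h3 : ‖η - s • P‖ < ρ := by
          rwa [Metric.mem_ball, dist_eq_norm] at hη
        rw [h1]; exact lt_of_le_of_lt h2 h3
      have htt' := abs_lt.mp htt
      have h2cp : 2 * c ≤ (μp - s) * ‖P‖ := by
        rw [hc_def]
        have h := min_le_left (μp - s) (s + μm)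
        linarith [mul_le_mul_of_nonneg_right h hPn.le]
      have h2cm : 2 * c ≤ (s + μm) * ‖P‖ := by
        rw [hc_def]
        have h := min_le_right (μp - s) (s + μm)
        linarith [mul_le_mul_of_nonneg_right h hPn.le]
      have hexp1 : (μp - s) * ‖P‖ = μp * ‖P‖ - s * ‖P‖ := by ring
      have hexp2 : (s + μm) * ‖P‖ = s * ‖P‖ + μm * ‖P‖ := by ring
      have ha : c ≤ μp * ‖P‖ - t := by
        rw [hexp1] at h2cp; linarith [htt'.1, htt'.2]
      have hbb : c ≤ μm * ‖P‖ + t := by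
        rw [hexp2] at h2cm; linarith [htt'.1, htt'.2]
      have hn1 : ‖μp • P - η‖ ^ 2 = (μp * ‖P‖ - t) ^ 2 + (‖η‖ ^ 2 - t ^ 2) := by
        rw [norm_sub_sq_real, real_inner_smul_left, hPη, norm_smul, Real.norm_eq_abs,
          abs_of_pos hμp0]
        ring
      have hn2 : ‖μm • P + η‖ ^ 2 = (μm * ‖P‖ + t) ^ 2 + (‖η‖ ^ 2 - t ^ 2) := by
        rw [norm_add_sq_real, real_inner_smul_left, hPη, norm_smul, Real.norm_eq_abs,
          abs_of_pos hμm0]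
        ring
      set W : ℝ := ‖η‖ ^ 2 - t ^ 2 with hW_def
      set q : ℝ := W / (2 * c) with hq_def
      have hq0 : 0 ≤ q := by positivity
      have hqW : 2 * c * q = W := by
        rw [hq_def]; field_simp
      have e1 : ‖μp • P - η‖ ≤ (μp * ‖P‖ - t) + q := by
        have hy : 0 ≤ (μp * ‖P‖ - t) + q := by linarith
        have hcq : 2 * c * q ≤ 2 * (μp * ‖P‖ - t) * q := by
          have h := mul_le_mul_of_nonneg_right ha hq0
          linarith
        have hexp : ((μp * ‖P‖ - t) + q) ^ 2
            = (μp * ‖P‖ - t) ^ 2 + 2 * (μp * ‖P‖ - t) * q + q ^ 2 := by ring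
        have hsq : ‖μp • P - η‖ ^ 2 ≤ ((μp * ‖P‖ - t) + q) ^ 2 := by
          rw [hn1, hexp]; linarith [sq_nonneg q]
        have h := Real.sqrt_le_sqrt hsq
        rwa [Real.sqrt_sq (norm_nonneg _), Real.sqrt_sq hy] at h
      have e2 : ‖μm • P + η‖ ≤ (μm * ‖P‖ + t) + q := by
        have hy : 0 ≤ (μm * ‖P‖ + t) + q := by linarith
        have hcq : 2 * c * q ≤ 2 * (μm * ‖P‖ + t) * q := by
          have h := mul_le_mul_of_nonneg_right hbb hq0
          linarith
        have hexp : ((μm * ‖P‖ + t) + q) ^ 2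
            = (μm * ‖P‖ + t) ^ 2 + 2 * (μm * ‖P‖ + t) * q + q ^ 2 := by ring
        have hsq : ‖μm • P + η‖ ^ 2 ≤ ((μm * ‖P‖ + t) + q) ^ 2 := by
          rw [hn2, hexp]; linarith [sq_nonneg q]
        have h := Real.sqrt_le_sqrt hsq
        rwa [Real.sqrt_sq (norm_nonneg _), Real.sqrt_sq hy] at h
      have h2q : W / c = 2 * q := by
        rw [hq_def]; field_simp
      have hab : μp * ‖P‖ + μm * ‖P‖ = ‖P‖ := by
        rw [← add_mul, hsum, one_mul]
      rw [h2q]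
      linarith
    -- coordinates with respect to the adapted orthonormal basis
    have hcoord : ∀ η : EuclideanSpace ℝ (Fin 3),
        (e η 1) ^ 2 + (e η 2) ^ 2 = ‖η‖ ^ 2 - ⟪u, η⟫ ^ 2 := by
      intro η
      have h0 : e η 0 = ⟪u, η⟫ := by
        rw [he_def, b.repr_apply_apply, hb0]
      have hnn : ‖e η‖ = ‖η‖ := e.norm_map η
      have h2 : ‖η‖ ^ 2 = ∑ i, ‖e η i‖ ^ 2 := by
        rw [← hnn, EuclideanSpace.norm_eq, Real.sq_sqrt (by positivity)]
      rw [Fin.sum_univ_three] at h2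
      simp only [Real.norm_eq_abs, sq_abs] at h2
      rw [← h0]; linarith
    set φ : EuclideanSpace ℝ (Fin 3) → ℝ≥0∞ :=
      fun y => (ENNReal.ofReal ((y 1 ^ 2 + y 2 ^ 2) / c))⁻¹ with hφ_def
    have hpoint : ∀ η ∈ Metric.ball (s • P) ρ,
        φ (e η) ≤ (ENNReal.ofReal (‖μp • P - η‖ + ‖μm • P + η‖ - ‖P‖))⁻¹ := by
      intro η hη
      rw [hφ_def]
      simp only
      rw [hcoord η]
      exact ENNReal.inv_le_inv.mpr (ENNReal.ofReal_le_ofReal (key η hη))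
    set v : EuclideanSpace ℝ (Fin 3) := e (s • P) with hv_def
    have hveq : v = (s * ‖P‖) • EuclideanSpace.single (0 : Fin 3) (1:ℝ) := by
      rw [hv_def, he_def]
      conv_lhs => rw [hPu]
      rw [_root_.map_smul, _root_.map_smul, ← hb0, b.repr_self, smul_smul]
    have hv0 : v 0 = s * ‖P‖ := by
      rw [hveq]; simp [EuclideanSpace.single_apply]
    have hv1 : v 1 = 0 := by
      rw [hveq]; simp [EuclideanSpace.single_apply]
    have hv2 : v 2 = 0 := by
      rw [hveq]; simp [EuclideanSpace.single_apply]
    -- change of variables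
    have hmp : MeasurePreserving e volume volume := b.measurePreserving_repr
    have hemb : MeasurableEmbedding
        (e : EuclideanSpace ℝ (Fin 3) → EuclideanSpace ℝ (Fin 3)) :=
      e.toHomeomorph.measurableEmbedding
    have hpre : (e : EuclideanSpace ℝ (Fin 3) → EuclideanSpace ℝ (Fin 3)) ⁻¹'
        Metric.ball v ρ = Metric.ball (s • P) ρ := by
      rw [hv_def]
      exact e.isometry.preimage_ball (s • P) ρ
    have hcv : ∫⁻ η in Metric.ball (s • P) ρ, φ (e η) = ∫⁻ y in Metric.ball v ρ, φ y := by
      rw [← hpre]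
      exact hmp.setLIntegral_comp_preimage_emb hemb φ _
    -- dyadic shells around the axis
    set ψ := (MeasurableEquiv.toLp 2 (Fin 3 → ℝ)).symm with hψ_def
    have hψmp : MeasurePreserving ψ volume volume :=
      EuclideanSpace.volume_preserving_symm_measurableEquiv_toLp (Fin 3)
    set r : ℕ → ℝ := fun n => ρ / 2 / 2 ^ (n + 1) with hr_def
    have hrpos : ∀ n, 0 < r n := by
      intro n; rw [hr_def]; positivity
    have hrle : ∀ n, r n ≤ ρ / 2 := by
      intro n
      rw [hr_def]
      exact div_le_self (by positivity) (one_le_pow₀ (by norm_num))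
    have hrmono : ∀ k m, k ≤ m → r m ≤ r k := by
      intro k m h
      have hpow : (2:ℝ) ^ (k+1) ≤ 2 ^ (m+1) :=
        pow_le_pow_right₀ (by norm_num) (by omega)
      rw [hr_def]
      show ρ/2/2^(m+1) ≤ ρ/2/2^(k+1)
      gcongr
    have hrhalf : ∀ n, r (n + 1) = r n / 2 := by
      intro n
      rw [hr_def]
      simp only
      rw [pow_succ]
      ring
    set C : ℕ → Fin 3 → Set ℝ := fun n =>
      ![Set.Ioo (v 0 - ρ / 2) (v 0 + ρ / 2), Set.Icc (-(r n)) (r n),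
        Set.Icc (-(r n)) (r n)] with hC_def
    set A : ℕ → Set (Fin 3 → ℝ) := fun n => Set.univ.pi (C n) with hA_def
    have hCm : ∀ n i, MeasurableSet (C n i) := by
      intro n i
      fin_cases i <;> simp [hC_def]
    have hAm : ∀ n, MeasurableSet (A n) := fun n => MeasurableSet.univ_pi (hCm n)
    have hmemA : ∀ n (x : Fin 3 → ℝ), x ∈ A n ↔
        (x 0 ∈ Set.Ioo (v 0 - ρ/2) (v 0 + ρ/2) ∧ x 1 ∈ Set.Icc (-(r n)) (r n) ∧
          x 2 ∈ Set.Icc (-(r n)) (r n)) := by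
      intro n x
      rw [hA_def]
      simp only [Set.mem_pi, Set.mem_univ, forall_true_left]
      constructor
      · intro h
        exact ⟨by simpa [hC_def] using h 0, by simpa [hC_def] using h 1,
          by simpa [hC_def] using h 2⟩
      · rintro ⟨h0, h1, h2⟩ i
        fin_cases i <;> simpa [hC_def]
    have hvolA : ∀ n, volume (A n) = ENNReal.ofReal (ρ * (2 * r n) * (2 * r n)) := by
      intro n
      rw [hA_def]
      simp only
      rw [volume_pi_pi, Fin.prod_univ_three]
      have h0 : C n 0 = Set.Ioo (v 0 - ρ/2) (v 0 + ρ/2) := by simp [hC_def]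
      have h1 : C n 1 = Set.Icc (-(r n)) (r n) := by simp [hC_def]
      have h2 : C n 2 = Set.Icc (-(r n)) (r n) := by simp [hC_def]
      rw [h0, h1, h2, Real.volume_Ioo, Real.volume_Icc,
        show v 0 + ρ/2 - (v 0 - ρ/2) = ρ by ring,
        show r n - (-(r n)) = 2 * r n by ring,
        ← ENNReal.ofReal_mul hρ.le, ← ENNReal.ofReal_mul (by positivity)]
    have hAsub : ∀ k m, k ≤ m → A m ⊆ A k := by
      intro k m hkm x hx
      rw [hmemA] at hx ⊢
      obtain ⟨h0, h1, h2⟩ := hx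
      have hr' := hrmono k m hkm
      exact ⟨h0, Set.Icc_subset_Icc (by linarith) hr' h1,
        Set.Icc_subset_Icc (by linarith) hr' h2⟩
    set S : ℕ → Set (EuclideanSpace ℝ (Fin 3)) := fun n => ψ ⁻¹' (A n \ A (n+1))
      with hS_def
    have hSm : ∀ n, MeasurableSet (S n) :=
      fun n => ψ.measurable ((hAm n).diff (hAm (n+1)))
    have hdisj : Pairwise (Function.onFun Disjoint S) := by
      have hkey : ∀ k m, k < m → Disjoint (S k) (S m) := by
        intro k m hkm
        rw [hS_def]
        simp only
        refine Set.disjoint_left.mpr ?_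
        rintro x ⟨hx1, hx2⟩ ⟨hy1, hy2⟩
        exact hx2 (hAsub (k+1) m hkm hy1)
      intro k m hkm
      rcases lt_or_gt_of_ne hkm with h | h
      · exact hkey k m h
      · exact (hkey m k h).symm
    have hvolS : ∀ n, volume (S n) = ENNReal.ofReal (3 * ρ * r n ^ 2) := by
      intro n
      rw [hS_def]
      simp only
      rw [hψmp.measure_preimage (((hAm n).diff (hAm (n+1))).nullMeasurableSet),
        measure_diff (hAsub n (n+1) (by omega)) (hAm (n+1)).nullMeasurableSet
          (by rw [hvolA]; exact ENNReal.ofReal_ne_top),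
        hvolA, hvolA, ← ENNReal.ofReal_sub _ (by positivity)]
      congr 1
      rw [hrhalf n]
      ring
    have hlow : ∀ n, ∀ y ∈ S n, (ENNReal.ofReal (2 * r n ^ 2 / c))⁻¹ ≤ φ y := by
      intro n y hy
      have hyA : ψ y ∈ A n := hy.1
      rw [hmemA] at hyA
      obtain ⟨h0, h1, h2⟩ := hyA
      have h1' : y 1 ∈ Set.Icc (-(r n)) (r n) := h1
      have h2' : y 2 ∈ Set.Icc (-(r n)) (r n) := h2
      rw [hφ_def]
      apply ENNReal.inv_le_inv.mpr
      apply ENNReal.ofReal_le_ofReal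
      have hsq1 : y 1 ^ 2 ≤ r n ^ 2 := sq_le_sq' h1'.1 h1'.2
      have hsq2 : y 2 ^ 2 ≤ r n ^ 2 := sq_le_sq' h2'.1 h2'.2
      rw [div_eq_mul_inv, div_eq_mul_inv]
      exact mul_le_mul_of_nonneg_right (by linarith) (by positivity)
    have hcontrib : ∀ n, ENNReal.ofReal (3 / 2 * ρ * c) ≤ ∫⁻ y in S n, φ y := by
      intro n
      have h1 : ∫⁻ _ in S n, (ENNReal.ofReal (2 * r n ^ 2 / c))⁻¹ ≤ ∫⁻ y in S n, φ y :=
        setLIntegral_mono' (hSm n) (hlow n)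
      rw [setLIntegral_const] at h1
      refine le_trans (le_of_eq ?_) h1
      rw [hvolS n]
      have hrn := hrpos n
      have hden : 0 < 2 * r n ^ 2 / c := by positivity
      have heq : (3:ℝ) / 2 * ρ * c = 3 * ρ * r n ^ 2 / (2 * r n ^ 2 / c) := by
        field_simp
      rw [heq, ENNReal.ofReal_div_of_pos hden, div_eq_mul_inv, mul_comm]
    have hSball : ∀ n, S n ⊆ Metric.ball v ρ := by
      intro n y hy
      have hyA : ψ y ∈ A n := hy.1
      rw [hmemA] at hyA
      obtain ⟨h0, h1, h2⟩ := hyA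
      have h0' : y 0 ∈ Set.Ioo (v 0 - ρ/2) (v 0 + ρ/2) := h0
      have h1' : y 1 ∈ Set.Icc (-(r n)) (r n) := h1
      have h2' : y 2 ∈ Set.Icc (-(r n)) (r n) := h2
      have hrn := hrle n
      have hrnp := hrpos n
      have hd : dist y v
          = Real.sqrt ((y 0 - v 0)^2 + ((y 1 - v 1)^2 + (y 2 - v 2)^2)) := by
        rw [EuclideanSpace.dist_eq, Fin.sum_univ_three]
        congr 1
        rw [Real.dist_eq, Real.dist_eq, Real.dist_eq, sq_abs, sq_abs, sq_abs]
        ring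
      have e0 : (y 0 - v 0)^2 < (ρ/2)^2 := by
        have h01 := h0'.1; have h02 := h0'.2
        nlinarith
      have e1' : (y 1 - v 1)^2 ≤ (ρ/2)^2 := by
        rw [hv1]
        have := sq_le_sq' h1'.1 h1'.2
        nlinarith
      have e2' : (y 2 - v 2)^2 ≤ (ρ/2)^2 := by
        rw [hv2]
        have := sq_le_sq' h2'.1 h2'.2
        nlinarith
      rw [Metric.mem_ball, hd]
      rw [show (ρ:ℝ) = Real.sqrt (ρ^2) from (Real.sqrt_sq hρ.le).symm]
      apply Real.sqrt_lt_sqrt (by positivity)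
      nlinarith
    have hUsub : (⋃ n, S n) ⊆ Metric.ball v ρ := Set.iUnion_subset hSball
    have hK : (ENNReal.ofReal (3 / 2 * ρ * c)) ≠ 0 :=
      (ENNReal.ofReal_pos.mpr (by positivity)).ne'
    have htop : ∫⁻ y in ⋃ n, S n, φ y = ⊤ := by
      rw [lintegral_iUnion hSm hdisj]
      refine top_unique ?_
      calc (⊤:ℝ≥0∞) = ∑' _ : ℕ, ENNReal.ofReal (3 / 2 * ρ * c) :=
            (ENNReal.tsum_const_eq_top_of_ne_zero hK).symm
        _ ≤ ∑' n, ∫⁻ y in S n, φ y := ENNReal.tsum_le_tsum hcontrib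
    refine top_unique ?_
    calc (⊤:ℝ≥0∞) = ∫⁻ y in ⋃ n, S n, φ y := htop.symm
      _ ≤ ∫⁻ y in Metric.ball v ρ, φ y := lintegral_mono_set hUsub
      _ = ∫⁻ η in Metric.ball (s • P) ρ, φ (e η) := hcv.symm
      _ ≤ ∫⁻ η in Metric.ball (s • P) ρ,
            (ENNReal.ofReal (‖μp • P - η‖ + ‖μm • P + η‖ - ‖P‖))⁻¹ :=
          setLIntegral_mono' measurableSet_ball hpoint
      _ ≤ ∫⁻ η in Metric.ball (s • P) δ,
            (ENNReal.ofReal (‖μp • P - η‖ + ‖μm • P + η‖ - ‖P‖))⁻¹ :=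
          lintegral_mono_set (Metric.ball_subset_ball hρδ)
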